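/- Fix real numbers α > 0 and ε with 0 < ε < α, and let Σ be a finite nonempty alphabet. Let n be a positive integer with n > 1/ε and n > 1/(α−ε). If P ⊆ (Fin n → Σ) contains some element S, and there exists U : Fin n → Σ with d(U,P) ≥ α, then every adaptive randomized q-query algorithm that is an ε-test for P satisfies q ≥ α/(6ε). -/

import Mathlib

open scoped Classical

/-- A deterministic adaptive `q`-query strategy over inputs `Fin n → Γ`. -/
structure Strategy (Γ : Type*) (n q : ℕ) where
  query : (i : Fin q) → (Fin i → Γ) → Fin n
  decide : (Fin q → Γ) → Bool

/-- The answers obtained by running a strategy on input `X`. -/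
noncomputable def Strategy.answers {Γ : Type*} {n q : ℕ}
    (S : Strategy Γ n q) (X : Fin n → Γ) (i : Fin q) : Γ :=
  X (S.query i (fun j => Strategy.answers S X ⟨j.val, j.isLt.trans i.isLt⟩))
termination_by i.val

/-- A strategy accepts `X` iff its decision on the answers is `true`. -/
def Strategy.accepts {Γ : Type*} {n q : ℕ} (S : Strategy Γ n q) (X : Fin n → Γ) : Prop :=
  S.decide (S.answers X) = true

/-- Acceptance probability of an adaptive randomized algorithm (a PMF over strategies). -/
noncomputable def acceptProb {Γ : Type*} {n q : ℕ}
    (μ : PMF (Strategy Γ n q)) (X : Fin n → Γ) : ℝ :=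
  (∑' S : Strategy Γ n q, if S.accepts X then μ S else 0).toReal

/-- Normalized Hamming distance. -/
noncomputable def hdist {Γ : Type*} {n : ℕ} (X Y : Fin n → Γ) : ℝ :=
  (Finset.univ.filter fun j => X j ≠ Y j).card / n

/-- Distance from an input to a property. -/
noncomputable def distSet {Γ : Type*} {n : ℕ} (X : Fin n → Γ) (P : Set (Fin n → Γ)) : ℝ :=
  sInf ((fun Y => hdist X Y) '' P)

/-- `μ` is an `ε`-test for `P`. -/
def IsTest {Γ : Type*} {n q : ℕ} (μ : PMF (Strategy Γ n q))
    (P : Set (Fin n → Γ)) (ε : ℝ) : Prop :=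
  (∀ X ∈ P, 2/3 ≤ acceptProb μ X) ∧
  (∀ X : Fin n → Γ, ε ≤ distSet X P → acceptProb μ X ≤ 1/3)

/-- The set of indices where `U` and `V` differ. -/
noncomputable def diffSet {Γ : Type*} {n : ℕ} (U V : Fin n → Γ) : Finset (Fin n) :=
  Finset.univ.filter fun j => U j ≠ V j

/-- `patch U V A` takes the values of `U` on `A` and of `V` elsewhere. -/
def patch {Γ : Type*} {n : ℕ} (U V : Fin n → Γ) (A : Finset (Fin n)) : Fin n → Γ :=
  fun j => if j ∈ A then U j else V j

/-- `μ` is a `(U,V,l)`-distinguisher. -/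
def IsDistinguisher {Γ : Type*} {n q : ℕ} (μ : PMF (Strategy Γ n q))
    (U V : Fin n → Γ) (l : ℕ) : Prop :=
  2/3 ≤ acceptProb μ V ∧
  ∀ A : Finset (Fin n), A ⊆ diffSet U V → A.card = l →
    acceptProb μ (patch U V A) ≤ 1/3

/-- A non-adaptive randomized `q`-query algorithm is a PMF over pairs
(query positions, decision function). -/
abbrev NAStrategy (Γ : Type*) (n q : ℕ) := (Fin q → Fin n) × ((Fin q → Γ) → Bool)

/-- Acceptance probability of a non-adaptive randomized algorithm. -/
noncomputable def naAcceptProb {Γ : Type*} {n q : ℕ}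
    (μ : PMF (NAStrategy Γ n q)) (X : Fin n → Γ) : ℝ :=
  (∑' p : NAStrategy Γ n q, if p.2 (fun i => X (p.1 i)) = true then μ p else 0).toReal

/-- `μ` (non-adaptive) is a `(U,V,l)`-distinguisher. -/
def NAIsDistinguisher {Γ : Type*} {n q : ℕ} (μ : PMF (NAStrategy Γ n q))
    (U V : Fin n → Γ) (l : ℕ) : Prop :=
  2/3 ≤ naAcceptProb μ V ∧
  ∀ A : Finset (Fin n), A ⊆ diffSet U V → A.card = l →
    naAcceptProb μ (patch U V A) ≤ 1/3

/-- Probability that index `j` appears among the query positions of a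
non-adaptive algorithm. -/
noncomputable def queryProb {Γ : Type*} {n q : ℕ}
    (μ : PMF (NAStrategy Γ n q)) (j : Fin n) : ℝ :=
  (∑' p : NAStrategy Γ n q, if ∃ i : Fin q, p.1 i = j then μ p else 0).toReal

lemma answers_congr {Γ : Type*} {n q : ℕ} (T : Strategy Γ n q) (X V : Fin n → Γ)
    (h : ∀ i : Fin q,
      X (T.query i fun j => T.answers V ⟨j.val, j.isLt.trans i.isLt⟩) =
      V (T.query i fun j => T.answers V ⟨j.val, j.isLt.trans i.isLt⟩)) :
    T.answers X = T.answers V := by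
  have H : ∀ m : ℕ, ∀ i : Fin q, i.val = m → T.answers X i = T.answers V i := by
    intro m
    induction m using Nat.strong_induction_on with
    | _ m IH =>
      intro i him
      conv_lhs => rw [Strategy.answers]
      conv_rhs => rw [Strategy.answers]
      have hpre : (fun j : Fin i.val => T.answers X ⟨j.val, j.isLt.trans i.isLt⟩)
          = fun j : Fin i.val => T.answers V ⟨j.val, j.isLt.trans i.isLt⟩ := by
        funext j
        exact IH j.val (him ▸ j.isLt) ⟨j.val, j.isLt.trans i.isLt⟩ rfl
      rw [hpre]
      exact h i
  exact funext fun i => H i.val i rfl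

lemma count_mem_le {n : ℕ} (D : Finset (Fin n)) (j : Fin n) (hj : j ∈ D) (l : ℕ) :
    ((D.powersetCard l).filter fun A => j ∈ A).card ≤ (D.card - 1).choose (l - 1) := by
  classical
  have key : ((D.powersetCard l).filter fun A => j ∈ A).card
      ≤ ((D.erase j).powersetCard (l-1)).card := by
    apply Finset.card_le_card_of_injOn (fun A => A.erase j)
    · intro A hA
      simp only [Finset.mem_coe, Finset.mem_filter, Finset.mem_powersetCard] at hA ⊢
      obtain ⟨⟨hAD, hAc⟩, hjA⟩ := hA
      exact ⟨Finset.erase_subset_erase j hAD, by rw [Finset.card_erase_of_mem hjA, hAc]⟩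
    · intro A hA B hB hAB
      simp only [Finset.coe_filter, Set.mem_setOf_eq] at hA hB
      have := congrArg (insert j) hAB
      rwa [Finset.insert_erase hA.2, Finset.insert_erase hB.2] at this
  simpa [Finset.card_powersetCard, Finset.card_erase_of_mem hj] using key

lemma count_bad {n : ℕ} (D Q : Finset (Fin n)) (l : ℕ) :
    ((D.powersetCard l).filter fun A => ∃ j ∈ Q, j ∈ A).card
      ≤ Q.card * (D.card - 1).choose (l - 1) := by
  classical
  have hsub : ((D.powersetCard l).filter fun A => ∃ j ∈ Q, j ∈ A)
      ⊆ (Q ∩ D).biUnion fun j => (D.powersetCard l).filter fun A => j ∈ A := by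
    intro A hA
    simp only [Finset.mem_filter, Finset.mem_powersetCard] at hA
    obtain ⟨⟨hAD, hAc⟩, j, hjQ, hjA⟩ := hA
    exact Finset.mem_biUnion.mpr ⟨j, Finset.mem_inter.mpr ⟨hjQ, hAD hjA⟩,
      Finset.mem_filter.mpr ⟨Finset.mem_powersetCard.mpr ⟨hAD, hAc⟩, hjA⟩⟩
  calc ((D.powersetCard l).filter fun A => ∃ j ∈ Q, j ∈ A).card
      ≤ ((Q ∩ D).biUnion fun j => (D.powersetCard l).filter fun A => j ∈ A).card :=
        Finset.card_le_card hsub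
    _ ≤ ∑ j ∈ Q ∩ D, ((D.powersetCard l).filter fun A => j ∈ A).card :=
        Finset.card_biUnion_le
    _ ≤ ∑ j ∈ Q ∩ D, (D.card - 1).choose (l - 1) :=
        Finset.sum_le_sum fun j hjm => count_mem_le D j (Finset.mem_inter.mp hjm).2 l
    _ = (Q ∩ D).card * (D.card - 1).choose (l - 1) := by rw [Finset.sum_const, smul_eq_mul]
    _ ≤ Q.card * (D.card - 1).choose (l - 1) :=
        Nat.mul_le_mul_right _ (Finset.card_le_card Finset.inter_subset_left)

lemma choose_id (m l : ℕ) (hm : 1 ≤ m) (hl : 1 ≤ l) :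
    m * (m - 1).choose (l - 1) = l * m.choose l := by
  obtain ⟨m', rfl⟩ := Nat.exists_eq_add_of_le hm
  obtain ⟨l', rfl⟩ := Nat.exists_eq_add_of_le hl
  simp only [Nat.add_sub_cancel_left, add_comm 1]
  have := Nat.add_one_mul_choose_eq m' l'
  simpa [Nat.succ_eq_add_one, mul_comm] using this


set_option maxHeartbeats 1000000 in
/-- **Corollary (straightforward statement).** If `P ⊆ Γ^n` contains some `S` and there
is `U` with `d(U,P) ≥ α`, where `0 < ε < α` and `n > 1/ε`, `n > 1/(α-ε)`, then every
adaptive randomized `q`-query `ε`-test for `P` satisfies `q ≥ α/(6ε)`. -/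
theorem test_lower_bound_straightforward {Γ : Type*} [Fintype Γ] [Nonempty Γ]
    (α ε : ℝ) (hα : 0 < α) (hε : 0 < ε) (hεα : ε < α)
    {n : ℕ} (hn : 0 < n) (hn1 : 1 / ε < (n : ℝ)) (hn2 : 1 / (α - ε) < (n : ℝ))
    (P : Set (Fin n → Γ)) (S : Fin n → Γ) (hS : S ∈ P)
    (U : Fin n → Γ) (hU : α ≤ distSet U P)
    (q : ℕ) (μ : PMF (Strategy Γ n q)) (hμ : IsTest μ P ε) :
    α / (6 * ε) ≤ q := by
  classical
  have hn' : (0:ℝ) < n := by exact_mod_cast hn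
  -- closest point V
  have hPfin : ((fun Y => hdist U Y) '' P).Finite := (Set.toFinite P).image _
  have hPne : ((fun Y => hdist U Y) '' P).Nonempty := ⟨_, ⟨S, hS, rfl⟩⟩
  obtain ⟨V, hV, hVd⟩ := hPne.csInf_mem hPfin
  have hVd' : hdist U V = sInf ((fun Y => hdist U Y) '' P) := hVd
  have hlow : ∀ Y ∈ P, hdist U V ≤ hdist U Y := fun Y hY => by
    rw [hVd']; exact csInf_le hPfin.bddBelow ⟨Y, hY, rfl⟩
  set D : Finset (Fin n) := diffSet U V with hD
  set m : ℕ := D.card with hmdef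
  have hdUV : hdist U V = m / n := rfl
  have hαm : α * n ≤ (m : ℝ) := by
    have h1 : α ≤ (m : ℝ) / n := by
      rw [← hdUV, hVd']; exact hU
    calc α * n ≤ ((m:ℝ)/n) * n := by nlinarith
      _ = m := by field_simp
  -- numeric facts
  have hεn : 1 < ε * n := by
    have := (div_lt_iff₀ hε).mp hn1; nlinarith
  set l : ℕ := ⌈ε * n⌉₊ with hldef
  have hεl : ε * n ≤ (l : ℝ) := Nat.le_ceil _
  have hl1 : 1 ≤ l := by
    have : (0:ℝ) < l := lt_of_lt_of_le (by nlinarith) hεl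
    exact_mod_cast Nat.one_le_iff_ne_zero.mpr (by positivity)
  have hlub : (l : ℝ) < ε * n + 1 := Nat.ceil_lt_add_one (by positivity)
  have hl2 : (l : ℝ) ≤ 2 * (ε * n) := by nlinarith
  have hlαn : (l : ℝ) < α * n := by
    have h2 : 1 < (α - ε) * n := by
      have := (div_lt_iff₀ (by linarith : (0:ℝ) < α - ε)).mp hn2; nlinarith
    nlinarith
  have hlm : l ≤ m := by
    have : (l : ℝ) < m := lt_of_lt_of_le hlαn hαm
    exact_mod_cast this.le
  have hm1 : 1 ≤ m := le_trans hl1 hlm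
  -- far points
  have hfar : ∀ A : Finset (Fin n), A ⊆ D → A.card = l →
      acceptProb μ (patch U V A) ≤ 1/3 := by
    intro A hAD hAl
    apply hμ.2
    show ε ≤ sInf ((fun Y => hdist (patch U V A) Y) '' P)
    refine le_csInf ⟨_, ⟨S, hS, rfl⟩⟩ ?_
    rintro b ⟨Y, hY, rfl⟩
    show ε ≤ hdist (patch U V A) Y
    -- card facts in ℕ
    have hUX : (Finset.univ.filter fun j => U j ≠ patch U V A j) = D \ A := by
      ext j
      simp only [Finset.mem_filter, Finset.mem_univ, true_and, Finset.mem_sdiff, hD, diffSet,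
        patch]
      by_cases hj : j ∈ A <;> simp [hj]
    have hUXcard : (Finset.univ.filter fun j => U j ≠ patch U V A j).card = m - l := by
      rw [hUX, Finset.card_sdiff_of_subset hAD, hAl]
    have hUY : m ≤ (Finset.univ.filter fun j => U j ≠ Y j).card := by
      have := hlow Y hY
      rw [hdUV, hdist, div_le_div_iff_of_pos_right hn'] at this
      exact_mod_cast this
    have hsubset : (Finset.univ.filter fun j => U j ≠ Y j) ⊆
        (Finset.univ.filter fun j => patch U V A j ≠ Y j) ∪
        (Finset.univ.filter fun j => U j ≠ patch U V A j) := by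
      intro j hj
      simp only [Finset.mem_filter, Finset.mem_univ, true_and, Finset.mem_union] at hj ⊢
      by_cases h : patch U V A j = Y j
      · exact Or.inr (fun hc => hj (hc.trans h))
      · exact Or.inl h
    have hcard : l ≤ (Finset.univ.filter fun j => patch U V A j ≠ Y j).card := by
      have h1 := (Finset.card_le_card hsubset).trans (Finset.card_union_le _ _)
      rw [hUXcard] at h1
      omega
    have : ε ≤ (((Finset.univ.filter fun j => patch U V A j ≠ Y j).card : ℝ)) / n := by
      rw [le_div_iff₀ hn']
      calc ε * n ≤ (l:ℝ) := hεl
        _ ≤ _ := by exact_mod_cast hcard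
    exact this
  -- probability setup
  set e : (Fin n → Γ) → ENNReal :=
    fun X => ∑' T : Strategy Γ n q, if T.accepts X then (μ T : ENNReal) else 0 with he
  have hele : ∀ X, e X ≤ 1 := fun X => by
    calc e X ≤ ∑' T, μ T := ENNReal.tsum_le_tsum fun T => by split <;> simp
      _ = 1 := μ.tsum_coe
  have hetop : ∀ X, e X ≠ ⊤ := fun X => ne_top_of_le_ne_top ENNReal.one_ne_top (hele X)
  have haccept : ∀ X, acceptProb μ X = (e X).toReal := fun X => rfl
  set runQ : Strategy Γ n q → Fin q → Fin n :=
    fun T i => T.query i fun j => T.answers V ⟨j.val, j.isLt.trans i.isLt⟩ with hrunQ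
  set 𝒜 : Finset (Finset (Fin n)) := D.powersetCard l with hAs
  set C : ℕ := (m - 1).choose (l - 1) with hCdef
  set N : ℕ := m.choose l with hNdef
  have hNpos : 0 < N := Nat.choose_pos hlm
  have hAcard : 𝒜.card = N := Finset.card_powersetCard l D
  -- per-A inequality
  have hkey : ∀ A ∈ 𝒜,
      e V ≤ e (patch U V A) + ∑' T : Strategy Γ n q,
        (if ∃ i, runQ T i ∈ A then (μ T : ENNReal) else 0) := by
    intro A _
    rw [← ENNReal.tsum_add]
    refine ENNReal.tsum_le_tsum fun T => ?_
    by_cases hbad : ∃ i, runQ T i ∈ A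
    · rw [if_pos hbad]
      refine le_add_left ?_
      split <;> simp
    · have hans : T.answers (patch U V A) = T.answers V := by
        apply answers_congr
        intro i
        have hni : runQ T i ∉ A := fun h => hbad ⟨i, h⟩
        simp only [patch]; exact if_neg hni
      have hiff : T.accepts (patch U V A) ↔ T.accepts V := by
        unfold Strategy.accepts; rw [hans]
      rw [if_neg hbad, add_zero, if_congr hiff rfl rfl]
  -- bad-sum bound
  have hbadsum : ∑ A ∈ 𝒜, (∑' T : Strategy Γ n q,
        (if ∃ i, runQ T i ∈ A then (μ T : ENNReal) else 0))
      ≤ ((q * C : ℕ) : ENNReal) := by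
    rw [← Summable.tsum_finsetSum (fun _ _ => ENNReal.summable)]
    have hper : ∀ T : Strategy Γ n q,
        ∑ A ∈ 𝒜, (if ∃ i, runQ T i ∈ A then (μ T : ENNReal) else 0)
          ≤ ((q * C : ℕ) : ENNReal) * μ T := by
      intro T
      have hre : ∑ A ∈ 𝒜, (if ∃ i, runQ T i ∈ A then (μ T : ENNReal) else 0)
          = ((𝒜.filter fun A => ∃ i, runQ T i ∈ A).card : ℕ) • (μ T : ENNReal) := by
        rw [← Finset.sum_filter, Finset.sum_const]
      rw [hre]
      have hcount : (𝒜.filter fun A => ∃ i, runQ T i ∈ A).card ≤ q * C := by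
        have heq : (𝒜.filter fun A => ∃ i, runQ T i ∈ A)
            = 𝒜.filter fun A => ∃ j ∈ Finset.image (runQ T) Finset.univ, j ∈ A := by
          apply Finset.filter_congr
          intro A _
          simp [Finset.mem_image]
        rw [heq, hAs]
        calc ((D.powersetCard l).filter fun A =>
              ∃ j ∈ Finset.image (runQ T) Finset.univ, j ∈ A).card
            ≤ (Finset.image (runQ T) Finset.univ).card * C := count_bad D _ l
          _ ≤ q * C := Nat.mul_le_mul_right _
              (le_trans Finset.card_image_le (by simp))
      rw [nsmul_eq_mul]
      exact mul_le_mul_left (by exact_mod_cast Nat.cast_le.mpr hcount) _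
    calc ∑' T : Strategy Γ n q, ∑ A ∈ 𝒜, (if ∃ i, runQ T i ∈ A then (μ T : ENNReal) else 0)
        ≤ ∑' T : Strategy Γ n q, ((q * C : ℕ) : ENNReal) * μ T :=
          ENNReal.tsum_le_tsum hper
      _ = ((q * C : ℕ) : ENNReal) := by rw [ENNReal.tsum_mul_left, μ.tsum_coe, mul_one]
  -- combine in ENNReal
  have hmain : (N : ENNReal) * e V ≤ (∑ A ∈ 𝒜, e (patch U V A)) + ((q * C : ℕ) : ENNReal) := by
    calc (N : ENNReal) * e V = ∑ _A ∈ 𝒜, e V := by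
          rw [Finset.sum_const, hAcard, nsmul_eq_mul]
      _ ≤ ∑ A ∈ 𝒜, (e (patch U V A) + ∑' T : Strategy Γ n q,
            (if ∃ i, runQ T i ∈ A then (μ T : ENNReal) else 0)) :=
          Finset.sum_le_sum hkey
      _ = (∑ A ∈ 𝒜, e (patch U V A)) + ∑ A ∈ 𝒜, (∑' T : Strategy Γ n q,
            (if ∃ i, runQ T i ∈ A then (μ T : ENNReal) else 0)) := Finset.sum_add_distrib
      _ ≤ _ := add_le_add le_rfl hbadsum
  -- to ℝ
  have hrhs_ne : (∑ A ∈ 𝒜, e (patch U V A)) + ((q * C : ℕ) : ENNReal) ≠ ⊤ := by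
    refine ENNReal.add_ne_top.mpr ⟨?_, ENNReal.natCast_ne_top _⟩
    exact (ENNReal.sum_lt_top.mpr fun A _ => lt_of_le_of_ne le_top (hetop _)).ne
  have hreal := ENNReal.toReal_mono hrhs_ne hmain
  rw [ENNReal.toReal_mul, ENNReal.toReal_add (ENNReal.sum_lt_top.mpr
      (fun A _ => lt_of_le_of_ne le_top (hetop _))).ne (ENNReal.natCast_ne_top _),
    ENNReal.toReal_sum (fun A _ => hetop _)] at hreal
  rw [show ((N : ENNReal)).toReal = (N : ℝ) from rfl,
    show (((q * C : ℕ) : ENNReal)).toReal = ((q * C : ℕ) : ℝ) from rfl] at hreal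
  -- real arithmetic
  have hV23 : 2/3 ≤ (e V).toReal := by rw [← haccept]; exact hμ.1 V hV
  have hfar' : ∀ A ∈ 𝒜, (e (patch U V A)).toReal ≤ 1/3 := by
    intro A hA
    obtain ⟨hAD, hAl⟩ := Finset.mem_powersetCard.mp hA
    rw [← haccept]; exact hfar A hAD hAl
  have hsumle : ∑ A ∈ 𝒜, (e (patch U V A)).toReal ≤ (N : ℝ) * (1/3) := by
    calc ∑ A ∈ 𝒜, (e (patch U V A)).toReal ≤ ∑ _A ∈ 𝒜, (1/3 : ℝ) :=
          Finset.sum_le_sum hfar'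
      _ = (N : ℝ) * (1/3) := by rw [Finset.sum_const, hAcard, nsmul_eq_mul]
  have hNle : (N : ℝ) ≤ 3 * (q * C) := by
    have h1 : (N : ℝ) * (2/3) ≤ (N : ℝ) * (1/3) + (q * C : ℕ) := by
      calc (N : ℝ) * (2/3) ≤ (N : ℝ) * (e V).toReal :=
            mul_le_mul_of_nonneg_left hV23 (Nat.cast_nonneg _)
        _ ≤ ∑ A ∈ 𝒜, (e (patch U V A)).toReal + (q * C : ℕ) := hreal
        _ ≤ (N : ℝ) * (1/3) + (q * C : ℕ) := by linarith
    push_cast at h1 ⊢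
    linarith
  -- m ≤ 3 q l
  have hid : (m : ℝ) * C = l * N := by exact_mod_cast choose_id m l hm1 hl1
  have hm3ql : (m : ℝ) ≤ 3 * q * l := by
    have hN' : (0:ℝ) < N := by exact_mod_cast hNpos
    have h2 : (m : ℝ) * N ≤ (3 * q * l) * N := by
      calc (m : ℝ) * N ≤ (m : ℝ) * (3 * (q * C)) :=
            mul_le_mul_of_nonneg_left hNle (Nat.cast_nonneg _)
        _ = 3 * q * ((m:ℝ) * C) := by ring
        _ = 3 * q * (l * N) := by rw [hid]
        _ = (3 * q * l) * N := by ring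
    exact le_of_mul_le_mul_right h2 hN'
  -- final
  rw [div_le_iff₀ (by linarith : (0:ℝ) < 6 * ε)]
  have : α * n ≤ (q : ℝ) * (6 * ε) * n := by
    calc α * n ≤ (m : ℝ) := hαm
      _ ≤ 3 * q * l := hm3ql
      _ ≤ 3 * q * (2 * (ε * n)) :=
          mul_le_mul_of_nonneg_left hl2 (by positivity)
      _ = (q : ℝ) * (6 * ε) * n := by ring
  exact le_of_mul_le_mul_right this hn'
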